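/- For every k ∈ ℕ, single-buffer simulation with capacity k is strictly contained in single-buffer simulation with capacity k+1: ⊑k ⊊ ⊑(k+1). -/

import Mathlib

open scoped Classical

/-- A Büchi automaton over alphabet `S`. -/
structure BA (S : Type) where
  Q : Type
  init : Q
  trans : Q → S → Q → Prop
  acc : Q → Prop

/-- The Büchi language of `A`: infinite words with a run from the initial state
visiting accepting states infinitely often. -/
def BA.Lang {S : Type} (A : BA S) : Set (ℕ → S) :=
  { w | ∃ ρ : ℕ → A.Q, ρ 0 = A.init ∧ (∀ n, A.trans (ρ n) (w n) (ρ (n+1))) ∧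
        ∀ n, ∃ m, n ≤ m ∧ A.acc (ρ m) }

/-- Single-buffer game: the configuration after Spoiler's move `(a, q')`:
 `a` is appended to the buffer. -/
def midCfg1 {S : Type} {QA QB : Type} (c : QA × List S × QB) (m : S × QA) :
    QA × List S × QB :=
  (m.2, c.2.1 ++ [m.1], c.2.2)

/-- Duplicator's move in the single-buffer game: skip (`none`) or consume the oldest
buffered letter along a matching transition to state `p'` (`some p'`). -/
noncomputable def dupApply1 {S : Type} (A B : BA S) :
    (A.Q × List S × B.Q) → Option B.Q → Option (A.Q × List S × B.Q)
  | c, none => some c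
  | c, some p' =>
    match c.2.1 with
    | [] => none
    | b :: γ => if B.trans c.2.2 b p' then some (c.1, γ, p') else none

/-- The configuration at the start of round `n` of the single-buffer game. -/
noncomputable def playCfg1 {S : Type} (A B : BA S)
    (sp : ℕ → S × A.Q) (dm : ℕ → Option B.Q) : ℕ → Option (A.Q × List S × B.Q)
  | 0 => some (A.init, [], B.init)
  | n+1 =>
    match playCfg1 A B sp dm n with
    | none => none
    | some c =>
      if A.trans c.1 (sp n).1 (sp n).2 then dupApply1 A B (midCfg1 c (sp n)) (dm n) else none

/-- Duplicator's winning condition for the single-buffer game with capacity `k`: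
the buffer never exceeds `k` (checked after her moves), and either Spoiler's run is
non-accepting, or Duplicator moves infinitely often and her run visits accepting
states infinitely often. -/
def Win1 {S : Type} (A B : BA S) (k : ℕ∞)
    (sp : ℕ → S × A.Q) (dm : ℕ → Option B.Q) : Prop :=
  (∀ n c, playCfg1 A B sp dm n = some c → (c.2.1.length : ℕ∞) ≤ k) ∧
  ((∃ N, ∀ n, N ≤ n → ¬ A.acc (sp n).2) ∨
    ((∀ n, ∃ m, n ≤ m ∧ dm m ≠ none) ∧ (∀ n, ∃ m, n ≤ m ∧ ∃ p ∈ dm m, B.acc p)))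

/-- Single-buffer simulation `A ⊑k B`: Duplicator has a winning strategy in the
single-buffer simulation game with buffer capacity `k` (`k = ⊤` is the unbounded
buffer). -/
def Sim1 {S : Type} (A B : BA S) (k : ℕ∞) : Prop :=
  ∃ dstrat : List ((S × A.Q) × Option B.Q) → (S × A.Q) → Option B.Q,
    ∀ sp dm, (∀ n, dm n = dstrat (List.ofFn fun i : Fin n => (sp i, dm i)) (sp n)) →
      (∀ n c, playCfg1 A B sp dm n = some c → A.trans c.1 (sp n).1 (sp n).2) →
      (∀ n, (playCfg1 A B sp dm n).isSome) ∧ Win1 A B k sp dm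

-- ### auxiliary material

lemma ofFn_nat_concat {α : Type*} (g : ℕ → α) (n : ℕ) :
    (List.ofFn fun i : Fin (n+1) => g i) = (List.ofFn fun i : Fin n => g i) ++ [g n] := by
  rw [List.ofFn_succ']; simp [List.concat_eq_append]

lemma ofFn_nat_cons {α : Type*} (g : ℕ → α) (n : ℕ) :
    (List.ofFn fun i : Fin (n+1) => g i) = g 0 :: List.ofFn fun i : Fin n => g (i+1) := by
  rw [List.ofFn_succ]; simp

namespace SepProof

abbrev AA : BA ℕ := ⟨Unit, (), fun _ _ _ => True, fun _ => True⟩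

def Bt (k : ℕ) : Option (ℕ × ℕ) → ℕ → Option (ℕ × ℕ) → Prop
  | none, _, some p => p.2 = 1
  | some p, b, some p' => p'.1 = p.1 ∧ p'.2 = p.2 + 1 ∧ (p.2 = k + 1 → b = p.1)
  | _, _, none => False

abbrev BB (k : ℕ) : BA ℕ := ⟨Option (ℕ × ℕ), none, Bt k, fun _ => True⟩

noncomputable def dstratP (k : ℕ) :
    List ((ℕ × Unit) × Option (Option (ℕ × ℕ))) → (ℕ × Unit) → Option (Option (ℕ × ℕ)) :=
  fun h a =>
    if h.length ≤ k then none
    else if h.length = k + 1 then some (some (a.1, 1))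
    else some (some ((h.getD (k+1) default).1.1, h.length - k))

def tgt (k : ℕ) (sp : ℕ → ℕ × Unit) (n : ℕ) : Unit × List ℕ × Option (ℕ × ℕ) :=
  if n ≤ k + 1 then ((), List.ofFn fun i : Fin n => (sp i).1, none)
  else ((), List.ofFn fun i : Fin (k+1) => (sp (n - (k+1) + i)).1,
        some ((sp (k+1)).1, n - (k+1)))

lemma cfgP (k : ℕ) (sp : ℕ → ℕ × Unit) (dm : ℕ → Option (Option (ℕ × ℕ)))
    (hdm : ∀ n, dm n = dstratP k (List.ofFn fun i : Fin n => (sp i, dm i)) (sp n)) :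
    ∀ n, playCfg1 AA (BB k) sp dm n = some (tgt k sp n) := by
  intro n
  induction n with
  | zero =>
    simp [playCfg1, tgt, AA, BB, Nat.zero_le]
  | succ n ih =>
    have hdmn : dm n = (if n ≤ k then none
        else if n = k + 1 then some (some ((sp n).1, 1))
        else some (some (((List.ofFn fun i : Fin n => (sp i, dm i)).getD (k+1) default).1.1,
          n - k))) := by
      rw [hdm n]; simp only [dstratP, List.length_ofFn]
    have hA : AA.trans (tgt k sp n).1 (sp n).1 (sp n).2 := trivial
    simp only [playCfg1, ih]
    rw [if_pos hA]
    rcases le_or_gt n k with h1 | h1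
    · -- Duplicator skips
      have hd : dm n = none := by rw [hdmn, if_pos h1]
      rw [hd]
      have ht : tgt k sp n = ((), List.ofFn fun i : Fin n => (sp i).1, none) := by
        rw [tgt, if_pos (by omega : n ≤ k + 1)]
      have ht' : tgt k sp (n+1) = ((), List.ofFn fun i : Fin (n+1) => (sp i).1, none) := by
        rw [tgt, if_pos (by omega : n + 1 ≤ k + 1)]
      simp only [dupApply1, ht, ht', midCfg1]
      refine congrArg some ?_
      refine Prod.ext rfl (Prod.ext ?_ rfl)
      exact (ofFn_nat_concat (fun m => (sp m).1) n).symm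
    · -- Duplicator consumes
      rcases eq_or_lt_of_le (Nat.succ_le_of_lt h1) with h2 | h2
      · -- first consumption round: n = k+1
        subst h2
        have hd : dm (k+1) = some (some ((sp (k+1)).1, 1)) := by
          rw [hdmn]; simp
        have ht : tgt k sp (k+1) = ((), List.ofFn fun i : Fin (k+1) => (sp i).1, none) := by
          rw [tgt, if_pos le_rfl]
        have hbuf : (List.ofFn fun i : Fin (k+1) => (sp i).1) ++ [(sp (k+1)).1]
            = (sp 0).1 :: List.ofFn fun i : Fin (k+1) => (sp (i+1)).1 := by
          rw [← ofFn_nat_concat (fun m => (sp m).1) (k+1),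
            ofFn_nat_cons (fun m => (sp m).1) (k+1)]
        rw [hd, ht]
        simp only [midCfg1, hbuf]
        have hstep : dupApply1 AA (BB k)
            ((sp (k+1)).2, (sp 0).1 :: (List.ofFn fun i : Fin (k+1) => (sp (i+1)).1), none)
            (some (some ((sp (k+1)).1, 1)))
            = some ((), List.ofFn (fun i : Fin (k+1) => (sp (i+1)).1),
                some ((sp (k+1)).1, 1)) := by
          show (if (BB k).trans none ((sp 0).1) (some ((sp (k+1)).1, 1))
              then some ((sp (k+1)).2, List.ofFn (fun i : Fin (k+1) => (sp (i+1)).1),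
                some ((sp (k+1)).1, 1)) else none) = _
          rw [if_pos (show (BB k).trans none (sp 0).1 (some ((sp (k+1)).1, 1)) from rfl)]
        rw [hstep, tgt, if_neg (by omega : ¬ (k+1+1 ≤ k+1))]
        have h3 : k + 1 + 1 - (k+1) = 1 := by omega
        rw [h3]
        have hfun : (fun i : Fin (k+1) => (sp ((i:ℕ)+1)).1)
            = fun i : Fin (k+1) => (sp (1+(i:ℕ))).1 :=
          funext fun i => by rw [Nat.add_comm]
        rw [hfun]
      · -- later rounds: n > k+1
        set d := n - (k+1) with hdd
        have hn : n = d + (k+1) := by omega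
        have hgetD : ((List.ofFn fun i : Fin n => (sp i, dm i)).getD (k+1) default)
            = (sp (k+1), dm (k+1)) := by
          rw [List.getD_eq_getElem _ _ (by simp [List.length_ofFn]; omega),
            List.getElem_ofFn]
        have hd : dm n = some (some ((sp (k+1)).1, n - k)) := by
          rw [hdmn, if_neg (by omega), if_neg (by omega), hgetD]
        have ht : tgt k sp n = ((), List.ofFn fun i : Fin (k+1) => (sp (d + i)).1,
            some ((sp (k+1)).1, d)) := by
          rw [tgt, if_neg (by omega), ← hdd]
        have hbuf : (List.ofFn fun i : Fin (k+1) => (sp (d + i)).1) ++ [(sp n).1]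
            = (sp d).1 :: List.ofFn fun i : Fin (k+1) => (sp (d + 1 + i)).1 := by
          have e1 : (List.ofFn fun i : Fin (k+1+1) => (sp (d + i)).1)
              = (List.ofFn fun i : Fin (k+1) => (sp (d + i)).1) ++ [(sp (d + (k+1))).1] :=
            ofFn_nat_concat (fun m => (sp (d + m)).1) (k+1)
          have e2 : (List.ofFn fun i : Fin (k+1+1) => (sp (d + i)).1)
              = (sp (d + 0)).1 :: List.ofFn fun i : Fin (k+1) => (sp (d + (i + 1))).1 :=
            ofFn_nat_cons (fun m => (sp (d + m)).1) (k+1)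
          rw [← hn] at e1
          rw [← e1, e2]
          refine congrArg₂ _ (by rw [Nat.add_zero]) (congrArg _ (funext fun i => ?_))
          have : d + ((i : ℕ) + 1) = d + 1 + i := by omega
          rw [this]
        rw [hd, ht]
        simp only [midCfg1, hbuf]
        have hBt : (BB k).trans (some ((sp (k+1)).1, d)) ((sp d).1)
            (some ((sp (k+1)).1, n - k)) := by
          refine ⟨rfl, by omega, fun hdk => ?_⟩
          exact congrArg (fun m => (sp m).1) (hdk : d = k + 1)
        have hstep : dupApply1 AA (BB k)
            ((sp n).2, (sp d).1 :: (List.ofFn fun i : Fin (k+1) => (sp (d + 1 + i)).1),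
              some ((sp (k+1)).1, d))
            (some (some ((sp (k+1)).1, n - k)))
            = some ((), List.ofFn (fun i : Fin (k+1) => (sp (d + 1 + i)).1),
                some ((sp (k+1)).1, n - k)) := by
          show (if (BB k).trans (some ((sp (k+1)).1, d)) ((sp d).1)
                (some ((sp (k+1)).1, n - k))
              then some ((sp n).2, List.ofFn (fun i : Fin (k+1) => (sp (d + 1 + i)).1),
                some ((sp (k+1)).1, n - k)) else none) = _
          rw [if_pos hBt]
        rw [hstep, tgt, if_neg (by omega : ¬ (n + 1 ≤ k+1))]
        have h3 : n + 1 - (k+1) = d + 1 := by omega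
        have h4 : n - k = d + 1 := by omega
        rw [h3, h4]

lemma simP (k : ℕ) : Sim1 AA (BB k) ((k : ℕ∞) + 1) := by
  refine ⟨dstratP k, fun sp dm hdm _ => ?_⟩
  have hc := cfgP k sp dm hdm
  have hdsome : ∀ m, k + 1 ≤ m → ∃ p, dm m = some p := by
    intro m hm
    rw [hdm m]
    simp only [dstratP, List.length_ofFn]
    rw [if_neg (by omega)]
    by_cases h : m = k + 1
    · rw [if_pos h]; exact ⟨_, rfl⟩
    · rw [if_neg h]; exact ⟨_, rfl⟩
  refine ⟨fun n => by rw [hc n]; rfl, ?_, Or.inr ⟨?_, ?_⟩⟩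
  · intro n c hcn
    rw [hc n] at hcn
    obtain rfl : tgt k sp n = c := Option.some.inj hcn
    rw [tgt]
    split_ifs with h
    · simp only [List.length_ofFn]
      exact_mod_cast h
    · simp only [List.length_ofFn]
      exact_mod_cast le_rfl
  · intro n
    refine ⟨max n (k+1), le_max_left _ _, ?_⟩
    obtain ⟨p, hp⟩ := hdsome _ (le_max_right n (k+1))
    simp [hp]
  · intro n
    refine ⟨max n (k+1), le_max_left _ _, ?_⟩
    obtain ⟨p, hp⟩ := hdsome _ (le_max_right n (k+1))
    exact ⟨p, by simp [hp], trivial⟩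

noncomputable def hist (k : ℕ)
    (dstrat : List ((ℕ × Unit) × Option (Option (ℕ × ℕ))) → (ℕ × Unit) → Option (Option (ℕ × ℕ)))
    (sp : ℕ → ℕ × Unit) : ℕ → List ((ℕ × Unit) × Option (Option (ℕ × ℕ)))
  | 0 => []
  | n + 1 => hist k dstrat sp n ++ [(sp n, dstrat (hist k dstrat sp n) (sp n))]

noncomputable def dmOf (k : ℕ)
    (dstrat : List ((ℕ × Unit) × Option (Option (ℕ × ℕ))) → (ℕ × Unit) → Option (Option (ℕ × ℕ)))
    (sp : ℕ → ℕ × Unit) (n : ℕ) : Option (Option (ℕ × ℕ)) :=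
  dstrat (hist k dstrat sp n) (sp n)

lemma hist_eq (k dstrat sp) :
    ∀ n, hist k dstrat sp n = List.ofFn (fun i : Fin n => (sp i, dmOf k dstrat sp i)) := by
  intro n
  induction n with
  | zero => simp [hist]
  | succ n ih =>
    rw [hist, ih, ofFn_nat_concat (fun m => (sp m, dmOf k dstrat sp m)) n, dmOf, ih]

lemma dm_consistent (k dstrat sp) : ∀ n,
    dmOf k dstrat sp n
      = dstrat (List.ofFn fun i : Fin n => (sp i, dmOf k dstrat sp i)) (sp n) := by
  intro n; rw [dmOf, hist_eq]

lemma hist_congr (k dstrat sp sp') :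
    ∀ n, (∀ m, m < n → sp m = sp' m) → hist k dstrat sp n = hist k dstrat sp' n := by
  intro n
  induction n with
  | zero => intro _; rfl
  | succ n ih =>
    intro h
    rw [hist, hist, ih (fun m hm => h m (by omega)), h n (by omega)]

lemma dmOf_congr (k dstrat sp sp') (n : ℕ) (h : ∀ m, m ≤ n → sp m = sp' m) :
    dmOf k dstrat sp n = dmOf k dstrat sp' n := by
  rw [dmOf, dmOf, hist_congr k dstrat sp sp' n (fun m hm => h m (by omega)), h n le_rfl]

lemma playCfg1_succ {S : Type} (A B : BA S) (sp dm) (n : ℕ) (c)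
    (hc : playCfg1 A B sp dm n = some c) :
    playCfg1 A B sp dm (n+1)
      = if A.trans c.1 (sp n).1 (sp n).2 then dupApply1 A B (midCfg1 c (sp n)) (dm n)
        else none := by
  rw [playCfg1, hc]

lemma dupApply1_none {S : Type} (A B : BA S) (c) : dupApply1 A B c none = some c := rfl

lemma dupApply1_some {S : Type} (A B : BA S) (u : A.Q) (b : S) (γ : List S) (q : B.Q) (p') :
    dupApply1 A B (u, b :: γ, q) (some p')
      = if B.trans q b p' then some (u, γ, p') else none := rfl

def cns : Option (ℕ × ℕ) → ℕ
  | none => 0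
  | some p => p.2

lemma simN (k : ℕ) : ¬ Sim1 AA (BB k) (k : ℕ∞) := by
  rintro ⟨dstrat, hd⟩
  classical
  let gval : Option (Option (ℕ × ℕ)) → ℕ := fun o =>
    match o with | some (some p) => p.1 | _ => 0
  let sp0 : ℕ → ℕ × Unit := fun _ => (0, ())
  let Bad : ℕ := ((Finset.range (k+1)).sup fun m => gval (dmOf k dstrat sp0 m)) + 1
  let sp1 : ℕ → ℕ × Unit := fun n => (if n = k + 1 then Bad else 0, ())
  let dm1 : ℕ → Option (Option (ℕ × ℕ)) := dmOf k dstrat sp1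
  have hspBad : (sp1 (k+1)).1 = Bad := by simp [sp1]
  have hagree : ∀ m, m ≤ k → dm1 m = dmOf k dstrat sp0 m := by
    intro m hm
    refine dmOf_congr k dstrat sp1 sp0 m (fun j hj => ?_)
    show (if j = k + 1 then Bad else 0, ()) = (0, ())
    rw [if_neg (by omega)]
  have hguess : ∀ m g, m ≤ k → dm1 m = some (some (g, 1)) → g < Bad := by
    intro m g hm hgj
    have h1 : gval (dmOf k dstrat sp0 m) = g := by
      rw [← hagree m hm, hgj]
    have h2 : gval (dmOf k dstrat sp0 m)
        ≤ (Finset.range (k+1)).sup fun m => gval (dmOf k dstrat sp0 m) :=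
      Finset.le_sup (f := fun m => gval (dmOf k dstrat sp0 m))
        (Finset.mem_range.mpr (by omega : m < k + 1))
    show g < ((Finset.range (k+1)).sup fun m => gval (dmOf k dstrat sp0 m)) + 1
    omega
  obtain ⟨Hsome, Hlen, -⟩ := hd sp1 dm1 (dm_consistent k dstrat sp1) (fun _ _ _ => trivial)
  have Hlen' : ∀ n c, playCfg1 AA (BB k) sp1 dm1 n = some c → c.2.1.length ≤ k :=
    fun n c h => Nat.cast_le.mp (Hlen n c h)
  have Inv : ∀ n c, playCfg1 AA (BB k) sp1 dm1 n = some c →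
      cns c.2.2 ≤ n ∧ cns c.2.2 ≤ k + 1 ∧
      c.2.1 = List.ofFn (fun i : Fin (n - cns c.2.2) => (sp1 (cns c.2.2 + (i : ℕ))).1) ∧
      (∀ g j, c.2.2 = some (g, j) → ∃ m, m ≤ k ∧ dm1 m = some (some (g, 1))) := by
    intro n
    induction n with
    | zero =>
      intro c hc
      obtain rfl : (AA.init, ([] : List ℕ), (BB k).init) = c := Option.some.inj hc
      exact ⟨by simp [cns, AA, BB], by simp [cns, AA, BB], by simp [cns, AA, BB],
        fun g j h => by simp [BB] at h⟩
    | succ n ih =>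
      intro c' hc'0
      obtain ⟨c, hc⟩ := Option.isSome_iff_exists.mp (Hsome n)
      obtain ⟨h1, h2, h3, h4⟩ := ih c hc
      have hc' := hc'0
      rw [playCfg1_succ _ _ _ _ _ _ hc,
        if_pos (show AA.trans c.1 (sp1 n).1 (sp1 n).2 from trivial)] at hc'
      have hfull : c.2.1 ++ [(sp1 n).1]
          = List.ofFn (fun i : Fin (n - cns c.2.2 + 1) => (sp1 (cns c.2.2 + (i : ℕ))).1) := by
        rw [h3, ofFn_nat_concat (fun m => (sp1 (cns c.2.2 + m)).1) (n - cns c.2.2)]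
        rw [show cns c.2.2 + (n - cns c.2.2) = n by omega]
      have hcons : c.2.1 ++ [(sp1 n).1]
          = (sp1 (cns c.2.2)).1
            :: List.ofFn (fun i : Fin (n - cns c.2.2) => (sp1 (cns c.2.2 + 1 + (i : ℕ))).1) := by
        rw [hfull, ofFn_nat_cons (fun m => (sp1 (cns c.2.2 + m)).1) (n - cns c.2.2)]
        refine congrArg₂ _ (by rw [Nat.add_zero]) (congrArg _ (funext fun i => ?_))
        rw [show cns c.2.2 + ((i : ℕ) + 1) = cns c.2.2 + 1 + (i : ℕ) by omega]
      cases hdm : dm1 n with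
      | none =>
        rw [hdm, dupApply1_none] at hc'
        obtain rfl := Option.some.inj hc'
        refine ⟨(by omega : cns c.2.2 ≤ n + 1), h2, ?_, h4⟩
        show c.2.1 ++ [(sp1 n).1]
            = List.ofFn fun i : Fin (n + 1 - cns c.2.2) => (sp1 (cns c.2.2 + (i : ℕ))).1
        rw [show n + 1 - cns c.2.2 = n - cns c.2.2 + 1 by omega]
        exact hfull
      | some p' =>
        rw [hdm] at hc'
        have hmid : midCfg1 c (sp1 n)
            = ((sp1 n).2, (sp1 (cns c.2.2)).1
                :: List.ofFn (fun i : Fin (n - cns c.2.2) =>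
                    (sp1 (cns c.2.2 + 1 + (i : ℕ))).1), c.2.2) := by
          rw [midCfg1]
          exact congrArg _ (congrArg₂ _ hcons rfl)
        rw [hmid, dupApply1_some] at hc'
        by_cases hBt : (BB k).trans c.2.2 (sp1 (cns c.2.2)).1 p'
        swap
        · rw [if_neg hBt] at hc'
          exact absurd hc' (by simp)
        rw [if_pos hBt] at hc'
        obtain rfl := Option.some.inj hc'
        rcases hcase : c.2.2 with - | q
        · -- first consumption: previous state is `none`
          rw [hcase] at hBt
          rcases p' with - | q'
          · exact absurd hBt (by simp [BB, Bt])
          obtain ⟨g, j'⟩ := q'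
          obtain rfl : j' = 1 := hBt
          have hj0 : cns c.2.2 = 0 := by rw [hcase]; rfl
          have hlenγ : n ≤ k := by
            have h5 := Hlen' (n+1) _ hc'0
            simp only [List.length_ofFn] at h5
            omega
          refine ⟨by show 1 ≤ n + 1; omega, by show 1 ≤ k + 1; omega, ?_, ?_⟩
          · show (List.ofFn fun i : Fin (n - 0) => (sp1 (0 + 1 + (i : ℕ))).1)
                = List.ofFn fun i : Fin (n + 1 - 1) => (sp1 (1 + (i : ℕ))).1
            rw [show n + 1 - 1 = n - 0 by omega]
          · rintro g'' j'' h
            have h5 : (g, 1) = (g'', j'') := Option.some.inj h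
            obtain ⟨rfl, rfl⟩ := Prod.mk.inj h5
            exact ⟨n, hlenγ, hdm⟩
        · -- subsequent consumption: previous state is `some q`
          rw [hcase] at hBt
          rcases p' with - | q'
          · exact absurd hBt (by simp [BB, Bt])
          obtain ⟨hg, hj, hchk⟩ :
              q'.1 = q.1 ∧ q'.2 = q.2 + 1 ∧ (q.2 = k + 1 → (sp1 q.2).1 = q.1) := hBt
          obtain ⟨m, hm, hdmm⟩ := h4 q.1 q.2 hcase
          have hqlt : q.1 < Bad := hguess m q.1 hm hdmm
          have hq2 : q.2 ≠ k + 1 := by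
            intro hk
            have h5 : (sp1 q.2).1 = q.1 := hchk hk
            rw [hk, hspBad] at h5
            omega
          have hjq : cns c.2.2 = q.2 := by rw [hcase]; rfl
          rw [hjq] at h1 h2 hfull hcons
          refine ⟨?_, ?_, ?_, ?_⟩
          · show q'.2 ≤ n + 1
            omega
          · show q'.2 ≤ k + 1
            omega
          · show (List.ofFn fun i : Fin (n - q.2) => (sp1 (q.2 + 1 + (i : ℕ))).1)
                = List.ofFn fun i : Fin (n + 1 - q'.2) => (sp1 (q'.2 + (i : ℕ))).1
            rw [hj, show n + 1 - (q.2 + 1) = n - q.2 by omega]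
          · rintro g'' j'' h
            have h5 : q' = (g'', j'') := Option.some.inj h
            subst h5
            exact ⟨m, hm, by rw [show g'' = q.1 from hg]; exact hdmm⟩
  obtain ⟨c, hc⟩ := Option.isSome_iff_exists.mp (Hsome (2*k+2))
  obtain ⟨h1, h2, h3, -⟩ := Inv _ c hc
  have h5 := Hlen' _ c hc
  rw [h3, List.length_ofFn] at h5
  omega

end SepProof

/-- For every `k ∈ ℕ`, single-buffer simulation with capacity `k`
is strictly contained in single-buffer simulation with capacity `k+1`. -/
theorem sim1_strict_hierarchy (k : ℕ) :
    (∀ (S : Type) (A B : BA S), Sim1 A B (k : ℕ∞) → Sim1 A B ((k : ℕ∞) + 1)) ∧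
    (∃ (S : Type) (A B : BA S), Sim1 A B ((k : ℕ∞) + 1) ∧ ¬ Sim1 A B (k : ℕ∞)) := by
  constructor
  · rintro S A B ⟨d, hd⟩
    refine ⟨d, fun sp dm h1 h2 => ?_⟩
    obtain ⟨hs, hl, hw⟩ := hd sp dm h1 h2
    exact ⟨hs, fun n c hc => (hl n c hc).trans le_self_add, hw⟩
  · exact ⟨ℕ, SepProof.AA, SepProof.BB k, SepProof.simP k, SepProof.simN k⟩
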